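/- If R is a symmetric nonnegative n×n matrix with maximum density κ and α = ‖R‖₁, then λ(R) ≤ 2√(κ(α − κ)). -/

import Mathlib

open Matrix

/-- The spectral radius of a real square matrix: the supremum of the absolute
values of its (complex) eigenvalues, i.e. of the roots of its characteristic
polynomial over `ℂ`. -/
noncomputable def specRad {n : ℕ} (R : Matrix (Fin n) (Fin n) ℝ) : ℝ :=
  sSup {r : ℝ | ∃ μ : ℂ, ((R.map (fun a => (a : ℂ))).charpoly).IsRoot μ ∧ r = ‖μ‖}

/-- The maximum absolute column sum norm `‖·‖₁`. -/
noncomputable def norm1 {m n : ℕ} (B : Matrix (Fin m) (Fin n) ℝ) : ℝ :=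
  ⨆ j, ∑ i, |B i j|

/-- The maximum absolute row sum norm `‖·‖_∞`. -/
noncomputable def normInf {m n : ℕ} (B : Matrix (Fin m) (Fin n) ℝ) : ℝ :=
  ⨆ i, ∑ j, |B i j|

/-- The maximum density of a square matrix: the maximum over nonempty subsets
`I` of `(∑_{i,j ∈ I} R i j) / (2|I|)`. -/
noncomputable def maxDensity {n : ℕ} (R : Matrix (Fin n) (Fin n) ℝ) : ℝ :=
  ⨆ I : {I : Finset (Fin n) // I.Nonempty},
    (∑ i ∈ I.1, ∑ j ∈ I.1, R i j) / (2 * I.1.card)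

namespace SpecRadAux

/-- Abel-summation style bound. -/
lemma abel_aux (κ : ℝ) : ∀ (N : ℕ) (c a : ℕ → ℝ),
    (∀ k l, k ≤ l → c l ≤ c k) → (∀ k, k < N → 0 ≤ c k) →
    (∀ m, m ≤ N → ∑ k ∈ Finset.range m, a k ≤ κ * m) →
    ∑ k ∈ Finset.range N, c k * a k ≤ κ * ∑ k ∈ Finset.range N, c k := by
  intro N
  induction N with
  | zero => simp
  | succ N ih =>
    intro c a hmono hpos hpre
    have h1 : ∑ k ∈ Finset.range N, (c k - c N) * a k ≤ κ * ∑ k ∈ Finset.range N, (c k - c N) :=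
      ih (fun k => c k - c N) a (fun k l hkl => by simpa using hmono k l hkl)
        (fun k hk => by simpa using hmono k N hk.le)
        (fun m hm => hpre m (hm.trans (Nat.le_succ N)))
    have hcN : 0 ≤ c N := hpos N (Nat.lt_succ_self N)
    have h2 : c N * ∑ k ∈ Finset.range (N + 1), a k ≤ c N * (κ * (N + 1)) := by
      have := hpre (N + 1) le_rfl
      push_cast at this ⊢
      exact mul_le_mul_of_nonneg_left this hcN
    have e0 : ∑ k ∈ Finset.range N, (c k - c N) * a k
        = ∑ k ∈ Finset.range (N + 1), (c k - c N) * a k := by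
      rw [Finset.sum_range_succ]; simp
    have e1 : ∑ k ∈ Finset.range (N + 1), c k * a k
        = ∑ k ∈ Finset.range N, (c k - c N) * a k + c N * ∑ k ∈ Finset.range (N + 1), a k := by
      rw [e0, Finset.mul_sum, ← Finset.sum_add_distrib]
      exact Finset.sum_congr rfl fun k _ => by ring
    have e2 : ∑ k ∈ Finset.range N, (c k - c N) = ∑ k ∈ Finset.range N, c k - N * c N := by
      rw [Finset.sum_sub_distrib, Finset.sum_const, Finset.card_range]; ring
    have e3 : ∑ k ∈ Finset.range (N + 1), c k = ∑ k ∈ Finset.range N, c k + c N :=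
      Finset.sum_range_succ c N
    rw [e1, e3]
    rw [e2] at h1
    push_cast at h2 ⊢
    nlinarith [h1, h2]

variable {n : ℕ}

/-- Matrix entries transported to `ℕ` indices via a permutation. -/
noncomputable def Pm (R : Matrix (Fin n) (Fin n) ℝ) (π : Equiv.Perm (Fin n)) (k l : ℕ) : ℝ :=
  if h : k < n ∧ l < n then R (π ⟨k, h.1⟩) (π ⟨l, h.2⟩) else 0

/-- Vector entries transported to `ℕ` indices via a permutation. -/
noncomputable def cm (u : Fin n → ℝ) (π : Equiv.Perm (Fin n)) (k : ℕ) : ℝ :=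
  if h : k < n then u (π ⟨k, h⟩) else 0

/-- In-weight of a vertex with respect to the ordering. -/
noncomputable def am (R : Matrix (Fin n) (Fin n) ℝ) (π : Equiv.Perm (Fin n)) (k : ℕ) : ℝ :=
  (∑ j ∈ Finset.range k, Pm R π j k) + Pm R π k k / 2

/-- Out-weight of a vertex with respect to the ordering. -/
noncomputable def bm (R : Matrix (Fin n) (Fin n) ℝ) (π : Equiv.Perm (Fin n)) (k : ℕ) : ℝ :=
  (∑ j ∈ Finset.Ico (k + 1) n, Pm R π j k) + Pm R π k k / 2

variable {R : Matrix (Fin n) (Fin n) ℝ} {π : Equiv.Perm (Fin n)} {u : Fin n → ℝ}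

lemma Pm_nonneg (hR : ∀ i j, 0 ≤ R i j) (k l : ℕ) : 0 ≤ Pm R π k l := by
  unfold Pm; split <;> simp [hR]

lemma Pm_symm (hsymm : R.IsSymm) (k l : ℕ) : Pm R π k l = Pm R π l k := by
  unfold Pm
  rcases Classical.em (k < n ∧ l < n) with h | h
  · rw [dif_pos h, dif_pos ⟨h.2, h.1⟩, ← hsymm.apply]
  · rw [dif_neg h, dif_neg (fun hc => h ⟨hc.2, hc.1⟩)]

lemma cm_nonneg (hu : ∀ i, 0 ≤ u i) (k : ℕ) : 0 ≤ cm u π k := by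
  unfold cm; split <;> simp [hu]

/-- Triangle decomposition of a symmetric double sum. -/
lemma triangle (m : ℕ) (f : ℕ → ℕ → ℝ) (hsym : ∀ k l, f k l = f l k) :
    ∑ k ∈ Finset.range m, ∑ l ∈ Finset.range m, f k l
      = 2 * (∑ k ∈ Finset.range m, ∑ j ∈ Finset.range k, f j k)
        + ∑ k ∈ Finset.range m, f k k := by
  have split : ∀ k ∈ Finset.range m, ∑ l ∈ Finset.range m, f k l
      = (∑ l ∈ Finset.range k, f k l) + (f k k + ∑ l ∈ Finset.Ico (k + 1) m, f k l) := by
    intro k hk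
    rw [← Finset.sum_range_add_sum_Ico _ (Finset.mem_range.mp hk).le,
      Finset.sum_eq_sum_Ico_succ_bot (Finset.mem_range.mp hk)]
  rw [Finset.sum_congr rfl split]
  rw [Finset.sum_add_distrib, Finset.sum_add_distrib]
  have swap : ∑ k ∈ Finset.range m, ∑ l ∈ Finset.Ico (k + 1) m, f k l
      = ∑ k ∈ Finset.range m, ∑ j ∈ Finset.range k, f j k := by
    simp_rw [Finset.range_eq_Ico]
    exact Finset.sum_Ico_Ico_comm' 0 m f
  have lower : ∑ k ∈ Finset.range m, ∑ l ∈ Finset.range k, f k l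
      = ∑ k ∈ Finset.range m, ∑ j ∈ Finset.range k, f j k :=
    Finset.sum_congr rfl fun k _ => Finset.sum_congr rfl fun l _ => hsym k l
  rw [swap, lower]; ring

lemma sum_attachFin {m : ℕ} (hmn : m ≤ n) (f : Fin n → ℝ) (g : ℕ → ℝ)
    (hfg : ∀ (k : ℕ) (hk : k < n), g k = f ⟨k, hk⟩) :
    ∑ k ∈ (Finset.range m).attachFin
        (fun k hk => lt_of_lt_of_le (Finset.mem_range.mp hk) hmn), f k
      = ∑ k ∈ Finset.range m, g k := by
  refine Finset.sum_bij' (i := fun (k : Fin n) _ => (k : ℕ))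
    (j := fun k hk => (⟨k, lt_of_lt_of_le (Finset.mem_range.mp hk) hmn⟩ : Fin n))
    ?_ ?_ ?_ ?_ ?_
  · intro a ha
    exact (Finset.mem_attachFin _).mp ha
  · intro a ha
    exact (Finset.mem_attachFin _).mpr ha
  · intro a ha; rfl
  · intro a ha; rfl
  · intro a ha
    exact (hfg a (lt_of_lt_of_le (Finset.mem_range.mp ((Finset.mem_attachFin _).mp ha)) hmn)).symm

lemma square_sum {m : ℕ} (hmn : m ≤ n) :
    ∑ i ∈ ((Finset.range m).attachFin
        (fun k hk => lt_of_lt_of_le (Finset.mem_range.mp hk) hmn)).image π,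
      ∑ j ∈ ((Finset.range m).attachFin
        (fun k hk => lt_of_lt_of_le (Finset.mem_range.mp hk) hmn)).image π, R i j
      = ∑ k ∈ Finset.range m, ∑ l ∈ Finset.range m, Pm R π k l := by
  rw [Finset.sum_image (fun x _ y _ h => π.injective h)]
  have inner : ∀ (k : ℕ) (hk : k < n),
      ∑ j ∈ ((Finset.range m).attachFin
          (fun k hk => lt_of_lt_of_le (Finset.mem_range.mp hk) hmn)).image π, R (π ⟨k, hk⟩) j
        = ∑ l ∈ Finset.range m, Pm R π k l := by
    intro k hk
    rw [Finset.sum_image (fun x _ y _ h => π.injective h)]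
    refine sum_attachFin hmn _ _ ?_
    intro l hl
    simp [Pm, hk, hl]
  refine sum_attachFin hmn _ _ ?_
  intro k hk
  exact (inner k hk).symm ▸ rfl

lemma prefix_bound {κ : ℝ} (hsymm : R.IsSymm)
    (hdens : ∀ I : Finset (Fin n), I.Nonempty → ∑ i ∈ I, ∑ j ∈ I, R i j ≤ κ * (2 * I.card)) :
    ∀ m, m ≤ n → ∑ k ∈ Finset.range m, am R π k ≤ κ * m := by
  intro m hmn
  rcases Nat.eq_zero_or_pos m with rfl | hm
  · simp
  have h2am : 2 * ∑ k ∈ Finset.range m, am R π k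
      = ∑ k ∈ Finset.range m, ∑ l ∈ Finset.range m, Pm R π k l := by
    rw [triangle m (Pm R π) (Pm_symm hsymm)]
    have e : ∑ k ∈ Finset.range m, am R π k
        = (∑ k ∈ Finset.range m, ∑ j ∈ Finset.range k, Pm R π j k)
          + ∑ k ∈ Finset.range m, Pm R π k k / 2 := by
      unfold am; exact Finset.sum_add_distrib
    rw [e, mul_add]
    congr 1
    rw [Finset.mul_sum]
    exact Finset.sum_congr rfl fun k _ => by ring
  set I := ((Finset.range m).attachFin
      (fun k hk => lt_of_lt_of_le (Finset.mem_range.mp hk) hmn)).image π with hI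
  have hcard : I.card = m := by
    rw [hI, Finset.card_image_of_injective _ π.injective, Finset.card_attachFin,
      Finset.card_range]
  have hne : I.Nonempty := Finset.card_pos.mp (by rw [hcard]; exact hm)
  have := hdens I hne
  rw [hcard] at this
  rw [hI, square_sum hmn] at this
  linarith [h2am]

lemma row_bound {α : ℝ} (hsymm : R.IsSymm) (hα : ∀ i, ∑ j, R i j ≤ α) :
    ∀ k, k < n → ∑ j ∈ Finset.range n, Pm R π j k ≤ α := by
  intro k hk
  have e1 : ∑ j ∈ Finset.range n, Pm R π j k = ∑ j : Fin n, Pm R π j k :=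
    (Fin.sum_univ_eq_sum_range (fun j => Pm R π j k) n).symm
  have e2 : ∀ j : Fin n, Pm R π (j : ℕ) k = R (π ⟨k, hk⟩) (π j) := by
    intro j
    simp only [Pm]
    rw [dif_pos (And.intro j.isLt hk)]
    simp only [Fin.eta]
    rw [hsymm.apply]
  rw [e1, Finset.sum_congr rfl fun j _ => e2 j]
  rw [Equiv.sum_comp π (fun i => R (π ⟨k, hk⟩) i)]
  exact hα _

lemma am_add_bm (k : ℕ) (hk : k < n) :
    am R π k + bm R π k = ∑ j ∈ Finset.range n, Pm R π j k := by
  rw [← Finset.sum_range_add_sum_Ico (fun j => Pm R π j k) hk.le,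
    Finset.sum_eq_sum_Ico_succ_bot hk (fun j => Pm R π j k)]
  unfold am bm; ring

lemma Q_eq : ∑ i, ∑ j, R i j * u i * u j
    = ∑ k ∈ Finset.range n, ∑ l ∈ Finset.range n, Pm R π k l * cm u π k * cm u π l := by
  have e0 : ∀ (k : Fin n) (l : Fin n),
      Pm R π (k : ℕ) (l : ℕ) * cm u π (k : ℕ) * cm u π (l : ℕ)
        = R (π k) (π l) * u (π k) * u (π l) := by
    intro k l
    simp [Pm, cm, k.isLt, l.isLt]
  rw [← Fin.sum_univ_eq_sum_range (fun k =>
      ∑ l ∈ Finset.range n, Pm R π k l * cm u π k * cm u π l) n]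
  have e1 : ∀ k : Fin n, ∑ l ∈ Finset.range n, Pm R π (k : ℕ) l * cm u π (k : ℕ) * cm u π l
      = ∑ l : Fin n, R (π k) (π l) * u (π k) * u (π l) := by
    intro k
    rw [← Fin.sum_univ_eq_sum_range (fun l => Pm R π k l * cm u π k * cm u π l) n]
    exact Finset.sum_congr rfl fun l _ => e0 k l
  rw [Finset.sum_congr rfl fun k _ => e1 k]
  rw [Equiv.sum_comp π (fun i => ∑ l : Fin n, R i (π l) * u i * u (π l))]
  refine Finset.sum_congr rfl fun i _ => ?_
  rw [Equiv.sum_comp π (fun j => R i j * u i * u j)]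

lemma sumsq_eq : ∑ k ∈ Finset.range n, (cm u π k) ^ 2 = ∑ i, (u i) ^ 2 := by
  rw [← Fin.sum_univ_eq_sum_range (fun k => (cm u π k) ^ 2) n]
  have e : ∀ k : Fin n, (cm u π (k : ℕ)) ^ 2 = (u (π k)) ^ 2 := by
    intro k; simp [cm, k.isLt]
  rw [Finset.sum_congr rfl fun k _ => e k]
  exact Equiv.sum_comp π (fun i => (u i) ^ 2)

/-- The key quadratic-form bound. -/
lemma quad_bound (R : Matrix (Fin n) (Fin n) ℝ) (hsymm : R.IsSymm)
    (hR : ∀ i j, 0 ≤ R i j) (u : Fin n → ℝ) (hu : ∀ i, 0 ≤ u i) :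
    ∑ i, ∑ j, R i j * u i * u j
      ≤ 2 * Real.sqrt (maxDensity R * (norm1 R - maxDensity R)) * ∑ i, (u i) ^ 2 := by
  have hdens : ∀ I : Finset (Fin n), I.Nonempty →
      ∑ i ∈ I, ∑ j ∈ I, R i j ≤ maxDensity R * (2 * I.card) := by
    intro I hI
    have hb : BddAbove (Set.range (fun I : {I : Finset (Fin n) // I.Nonempty} =>
        (∑ i ∈ I.1, ∑ j ∈ I.1, R i j) / (2 * I.1.card))) :=
      Set.Finite.bddAbove (Set.finite_range _)
    have h1 : (∑ i ∈ I, ∑ j ∈ I, R i j) / (2 * I.card) ≤ maxDensity R :=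
      le_ciSup hb ⟨I, hI⟩
    have hcp : (0:ℝ) < I.card := by exact_mod_cast hI.card_pos
    have hc : (0:ℝ) < 2 * I.card := by linarith
    calc ∑ i ∈ I, ∑ j ∈ I, R i j
        = ((∑ i ∈ I, ∑ j ∈ I, R i j) / (2 * I.card)) * (2 * I.card) := by field_simp
      _ ≤ maxDensity R * (2 * I.card) := mul_le_mul_of_nonneg_right h1 hc.le
  by_cases hκpos : 0 < maxDensity R
  case neg =>
    push_neg at hκpos
    have hzero : ∀ i j, R i j = 0 := by
      intro i j
      have hIJ := hdens {i, j} (by simp)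
      have h1 : R i j ≤ ∑ j' ∈ ({i, j} : Finset (Fin n)), R i j' :=
        Finset.single_le_sum (fun x _ => hR i x) (by simp)
      have h2 : ∑ j' ∈ ({i, j} : Finset (Fin n)), R i j'
          ≤ ∑ i' ∈ ({i, j} : Finset (Fin n)), ∑ j' ∈ ({i, j} : Finset (Fin n)), R i' j' :=
        Finset.single_le_sum (fun x _ => Finset.sum_nonneg fun y _ => hR x y) (by simp)
      have h3 : maxDensity R * (2 * (({i, j} : Finset (Fin n)).card : ℝ)) ≤ 0 :=
        mul_nonpos_of_nonpos_of_nonneg hκpos (by positivity)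
      exact le_antisymm (h1.trans (h2.trans (hIJ.trans h3))) (hR i j)
    have hz : ∑ i, ∑ j, R i j * u i * u j = 0 := by
      simp [hzero]
    rw [hz]
    positivity
  case pos =>
  set κ := maxDensity R with hκdef
  set α := norm1 R with hαdef
  have hn : 0 < n := by
    rcases Nat.eq_zero_or_pos n with rfl | h
    · haveI : IsEmpty {I : Finset (Fin 0) // I.Nonempty} :=
        ⟨fun I => by obtain ⟨x, _⟩ := I.2; exact x.elim0⟩
      rw [hκdef, maxDensity, Real.iSup_of_isEmpty _] at hκpos
      exact absurd hκpos (lt_irrefl 0)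
    · exact h
  have hαrow : ∀ i, ∑ j, R i j ≤ α := by
    intro i
    have hb : BddAbove (Set.range fun j => ∑ i', |R i' j|) :=
      Set.Finite.bddAbove (Set.finite_range _)
    have h1 : ∑ i', |R i' i| ≤ α := le_ciSup hb i
    refine le_trans (le_of_eq ?_) h1
    refine Finset.sum_congr rfl fun j _ => ?_
    rw [abs_of_nonneg (hR j i), hsymm.apply]
  have hα0 : 0 ≤ α :=
    le_trans (Finset.sum_nonneg fun j _ => hR ⟨0, hn⟩ j) (hαrow ⟨0, hn⟩)
  have hκα : κ + κ ≤ α := by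
    have h2 : κ ≤ α / 2 := by
      rw [hκdef, maxDensity]
      apply Real.iSup_le _ (by positivity)
      rintro ⟨I, hI⟩
      have hcp : (0:ℝ) < I.card := by exact_mod_cast hI.card_pos
      rw [div_le_div_iff₀ (by linarith) two_pos]
      have h3 : ∑ i ∈ I, ∑ j ∈ I, R i j ≤ ∑ i ∈ I, α := by
        refine Finset.sum_le_sum fun i _ => ?_
        refine le_trans ?_ (hαrow i)
        exact Finset.sum_le_sum_of_subset_of_nonneg (Finset.subset_univ I)
          (fun j _ _ => hR i j)
      rw [Finset.sum_const, nsmul_eq_mul] at h3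
      nlinarith [h3]
    linarith
  -- the sorting permutation: `u ∘ π` is antitone
  set π : Equiv.Perm (Fin n) := (Fin.revPerm).trans (Tuple.sort u) with hπ
  have hord : ∀ k l : Fin n, k ≤ l → u (π l) ≤ u (π k) := by
    intro k l h
    have := Tuple.monotone_sort u (Fin.rev_le_rev.mpr h)
    simpa [hπ] using this
  have hcanti : ∀ k l : ℕ, k ≤ l → cm u π l ≤ cm u π k := by
    intro k l hkl
    unfold cm
    by_cases hl : l < n
    · have hk : k < n := lt_of_le_of_lt hkl hl
      rw [dif_pos hl, dif_pos hk]
      exact hord ⟨k, hk⟩ ⟨l, hl⟩ hkl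
    · rw [dif_neg hl]
      by_cases hk : k < n
      · rw [dif_pos hk]; exact hu _
      · rw [dif_neg hk]
  have hc0 : ∀ k, 0 ≤ cm u π k := cm_nonneg hu
  -- main quantities
  set S := ∑ k ∈ Finset.range n, (cm u π k) ^ 2 * am R π k with hSdef
  set Tb := ∑ k ∈ Finset.range n, (cm u π k) ^ 2 * bm R π k with hTdef
  set Sig := ∑ k ∈ Finset.range n, (cm u π k) ^ 2 with hSigdef
  set D := ∑ k ∈ Finset.range n, Pm R π k k * (cm u π k) ^ 2 with hDdef
  have hS : S ≤ κ * Sig :=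
    abel_aux κ n _ _ (fun k l h => pow_le_pow_left₀ (hc0 l) (hcanti k l h) 2)
      (fun k _ => sq_nonneg _) (prefix_bound hsymm hdens)
  have hT : Tb ≤ α * Sig - S := by
    have h1 : ∑ k ∈ Finset.range n, ((cm u π k) ^ 2 * am R π k + (cm u π k) ^ 2 * bm R π k)
        ≤ ∑ k ∈ Finset.range n, (cm u π k) ^ 2 * α := by
      refine Finset.sum_le_sum fun k hk => ?_
      have hkn := Finset.mem_range.mp hk
      rw [← mul_add, am_add_bm k hkn]
      exact mul_le_mul_of_nonneg_left (row_bound hsymm hαrow k hkn) (sq_nonneg _)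
    rw [Finset.sum_add_distrib] at h1
    have h2 : ∑ k ∈ Finset.range n, (cm u π k) ^ 2 * α = α * Sig := by
      rw [hSigdef, Finset.mul_sum]
      exact Finset.sum_congr rfl fun k _ => by ring
    rw [h2] at h1
    rw [hSdef, hTdef]
    linarith [h1]
  -- set up t
  set t := Real.sqrt ((α - κ) / κ) with ht
  have hκ2 : κ ≤ α - κ := by linarith
  have ht1 : 1 ≤ t := by
    rw [ht, show (1:ℝ) = Real.sqrt 1 from (Real.sqrt_one).symm]
    exact Real.sqrt_le_sqrt ((one_le_div hκpos).mpr hκ2)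
  have ht0 : 0 < t := lt_of_lt_of_le one_pos ht1
  have hinv : t * (1 / t) = 1 := mul_one_div_cancel ht0.ne'
  -- triangle decomposition of the quadratic form
  have hQtri : ∑ i, ∑ j, R i j * u i * u j
      = 2 * (∑ k ∈ Finset.range n, ∑ j ∈ Finset.range k, Pm R π j k * cm u π j * cm u π k)
        + ∑ k ∈ Finset.range n, Pm R π k k * cm u π k * cm u π k := by
    rw [Q_eq (π := π)]
    exact triangle n _ (fun k l => by rw [Pm_symm hsymm]; ring)
  -- E1 and E2
  have hmulsum : ∀ (k : ℕ) (v : ℝ) (s : Finset ℕ),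
      ∑ j ∈ s, Pm R π j k * v = v * ∑ j ∈ s, Pm R π j k := by
    intro k v s
    rw [Finset.mul_sum]
    exact Finset.sum_congr rfl fun j _ => by ring
  have hE1 : ∑ k ∈ Finset.range n, ∑ j ∈ Finset.range k, Pm R π j k * (cm u π k) ^ 2
      = S - D / 2 := by
    rw [hSdef, hDdef, Finset.sum_div, ← Finset.sum_sub_distrib]
    refine Finset.sum_congr rfl fun k _ => ?_
    rw [hmulsum k ((cm u π k) ^ 2) (Finset.range k)]
    unfold am
    ring
  have hE2 : ∑ k ∈ Finset.range n, ∑ j ∈ Finset.range k, Pm R π j k * (cm u π j) ^ 2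
      = Tb - D / 2 := by
    have hswap : ∑ k ∈ Finset.range n, ∑ j ∈ Finset.range k, Pm R π j k * (cm u π j) ^ 2
        = ∑ j ∈ Finset.range n, ∑ k ∈ Finset.Ico (j + 1) n, Pm R π j k * (cm u π j) ^ 2 := by
      simp_rw [Finset.range_eq_Ico]
      exact (Finset.sum_Ico_Ico_comm' 0 n (fun j k => Pm R π j k * (cm u π j) ^ 2)).symm
    rw [hswap, hTdef, hDdef, Finset.sum_div, ← Finset.sum_sub_distrib]
    refine Finset.sum_congr rfl fun j _ => ?_
    have e : ∑ k ∈ Finset.Ico (j + 1) n, Pm R π j k * (cm u π j) ^ 2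
        = (cm u π j) ^ 2 * ∑ k ∈ Finset.Ico (j + 1) n, Pm R π k j := by
      rw [Finset.mul_sum]
      exact Finset.sum_congr rfl fun k _ => by rw [Pm_symm hsymm]; ring
    rw [e]
    unfold bm
    ring
  -- pointwise AM-GM bound on the off-diagonal part
  have hoff : ∀ k ∈ Finset.range n, ∀ j ∈ Finset.range k,
      2 * (Pm R π j k * cm u π j * cm u π k)
        ≤ Pm R π j k * (t * (cm u π k) ^ 2 + (1 / t) * (cm u π j) ^ 2) := by
    intro k _ j _
    have hP := Pm_nonneg (π := π) hR j k
    have hsc : 2 * (cm u π j * cm u π k) ≤ t * (cm u π k) ^ 2 + (1 / t) * (cm u π j) ^ 2 := by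
      have e : t * (cm u π k) ^ 2 + (1 / t) * (cm u π j) ^ 2 - 2 * (cm u π j * cm u π k)
          = (t * cm u π k - cm u π j) ^ 2 / t := by
        field_simp; ring
      linarith [div_nonneg (sq_nonneg (t * cm u π k - cm u π j)) ht0.le, e.ge, e.le]
    calc 2 * (Pm R π j k * cm u π j * cm u π k)
        = Pm R π j k * (2 * (cm u π j * cm u π k)) := by ring
      _ ≤ Pm R π j k * (t * (cm u π k) ^ 2 + (1 / t) * (cm u π j) ^ 2) :=
          mul_le_mul_of_nonneg_left hsc hP
  -- assemble : Q ≤ t * S + (1/t) * Tb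
  have hD0 : 0 ≤ D := Finset.sum_nonneg fun k _ =>
    mul_nonneg (Pm_nonneg hR k k) (sq_nonneg _)
  have hQb : ∑ i, ∑ j, R i j * u i * u j ≤ t * S + (1 / t) * Tb := by
    rw [hQtri]
    have h1 : 2 * (∑ k ∈ Finset.range n, ∑ j ∈ Finset.range k,
          Pm R π j k * cm u π j * cm u π k)
        ≤ ∑ k ∈ Finset.range n, ∑ j ∈ Finset.range k,
            Pm R π j k * (t * (cm u π k) ^ 2 + (1 / t) * (cm u π j) ^ 2) := by
      rw [Finset.mul_sum]
      refine Finset.sum_le_sum fun k hk => ?_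
      rw [Finset.mul_sum]
      exact Finset.sum_le_sum fun j hj => hoff k hk j hj
    have h2 : ∑ k ∈ Finset.range n, ∑ j ∈ Finset.range k,
          Pm R π j k * (t * (cm u π k) ^ 2 + (1 / t) * (cm u π j) ^ 2)
        = t * (S - D / 2) + (1 / t) * (Tb - D / 2) := by
      rw [← hE1, ← hE2, Finset.mul_sum, Finset.mul_sum, ← Finset.sum_add_distrib]
      refine Finset.sum_congr rfl fun k _ => ?_
      rw [Finset.mul_sum, Finset.mul_sum, ← Finset.sum_add_distrib]
      refine Finset.sum_congr rfl fun j _ => ?_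
      ring
    have h3 : ∑ k ∈ Finset.range n, Pm R π k k * cm u π k * cm u π k = D := by
      rw [hDdef]
      exact Finset.sum_congr rfl fun k _ => by ring
    rw [h3]
    have h4 : D ≤ t * (D / 2) + (1 / t) * (D / 2) := by
      have e : t * (D / 2) + (1 / t) * (D / 2) - D = D * ((t - 1) ^ 2 / t) / 2 := by
        field_simp; ring
      linarith [mul_nonneg hD0 (div_nonneg (sq_nonneg (t - 1)) ht0.le), e.ge, e.le]
    have h5 : t * (S - D / 2) + (1 / t) * (Tb - D / 2)
        = t * S + (1 / t) * Tb - (t * (D / 2) + (1 / t) * (D / 2)) := by ring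
    linarith [h1, h2, h4, h5]
  -- numeric endgame
  have hSig0 : 0 ≤ Sig := Finset.sum_nonneg fun k _ => sq_nonneg _
  have hSigu : Sig = ∑ i, (u i) ^ 2 := sumsq_eq
  set s := Real.sqrt (κ * (α - κ)) with hs
  have hs1 : κ * t = s := by
    have e : κ ^ 2 * ((α - κ) / κ) = κ * (α - κ) := by field_simp
    calc κ * t = Real.sqrt (κ ^ 2) * Real.sqrt ((α - κ) / κ) := by
          rw [Real.sqrt_sq hκpos.le]
      _ = Real.sqrt (κ ^ 2 * ((α - κ) / κ)) := (Real.sqrt_mul (sq_nonneg κ) _).symm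
      _ = s := by rw [e]
  have hs2 : s * t = α - κ := by
    have e : κ * (α - κ) * ((α - κ) / κ) = (α - κ) ^ 2 := by field_simp
    calc s * t = Real.sqrt (κ * (α - κ) * ((α - κ) / κ)) :=
          (Real.sqrt_mul (mul_nonneg hκpos.le (by linarith)) _).symm
      _ = Real.sqrt ((α - κ) ^ 2) := by rw [e]
      _ = α - κ := Real.sqrt_sq (by linarith)
  have htt : 0 ≤ t - 1 / t := by
    have h1 : 1 / t ≤ 1 := by rw [div_le_one ht0]; exact ht1
    linarith
  have h1t : (0:ℝ) < 1 / t := by positivity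
  have step1 : ∑ i, ∑ j, R i j * u i * u j ≤ t * S + (1 / t) * (α * Sig - S) :=
    hQb.trans (add_le_add le_rfl (mul_le_mul_of_nonneg_left hT h1t.le))
  have step3 : S * (t - 1 / t) ≤ (κ * Sig) * (t - 1 / t) :=
    mul_le_mul_of_nonneg_right hS htt
  have step4 : (κ * Sig) * (t - 1 / t) + (1 / t) * (α * Sig) = 2 * s * Sig := by
    have e1 : (κ * Sig) * (t - 1 / t) + (1 / t) * (α * Sig)
        = (κ * t) * Sig + ((α - κ) * (1 / t)) * Sig := by ring
    rw [e1, hs1]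
    have e2 : (α - κ) * (1 / t) = s := by
      rw [← hs2]; field_simp
    rw [e2]; ring
  rw [← hSigu]
  nlinarith [step1, step3, step4]

end SpecRadAux

open SpecRadAux in
/-- If `R` is symmetric nonnegative with maximum density `κ` and `α = ‖R‖₁`,
then `λ(R) ≤ 2√(κ(α - κ))`. -/
theorem specRad_le_density_bound {n : ℕ} (R : Matrix (Fin n) (Fin n) ℝ)
    (hsymm : R.IsSymm) (hR : ∀ i j, 0 ≤ R i j) :
    specRad R ≤ 2 * Real.sqrt (maxDensity R * (norm1 R - maxDensity R)) := by
  have hM0 : 0 ≤ 2 * Real.sqrt (maxDensity R * (norm1 R - maxDensity R)) := by positivity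
  apply Real.sSup_le _ hM0
  rintro r ⟨μ, hroot, rfl⟩
  set M := R.map (fun a => (a : ℂ)) with hM
  -- extract an eigenvector
  have hdet : (Matrix.diagonal (fun _ => μ) - M).det = 0 := by
    have : M.charpoly.eval μ = (Matrix.diagonal (fun _ => μ) - M).det := by
      rw [Matrix.charpoly, ← Polynomial.coe_evalRingHom, RingHom.map_det]
      congr 1
      ext i j
      by_cases h : i = j <;>
        simp [h, Matrix.charmatrix_apply, Matrix.diagonal, Matrix.one_apply]
    rw [← this]
    exact hroot
  obtain ⟨z, hz0, hz⟩ := (Matrix.exists_mulVec_eq_zero_iff).mpr hdet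
  have heig : ∀ i, μ * z i = ∑ j, M i j * z j := by
    intro i
    have hi := congrFun hz i
    simp only [Matrix.mulVec, dotProduct, Pi.zero_apply, Matrix.sub_apply,
      Matrix.diagonal_apply, sub_mul, Finset.sum_sub_distrib] at hi
    have h2 : ∑ j, (if i = j then μ else 0) * z j = μ * z i := by
      simp [Finset.sum_ite_eq]
    rw [h2] at hi
    linear_combination hi
  -- pass to absolute values
  set u : Fin n → ℝ := fun i => ‖z i‖ with hu
  have hN : (0:ℝ) < ∑ i, (u i) ^ 2 := by
    obtain ⟨i0, hi0⟩ : ∃ i, z i ≠ 0 := by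
      by_contra h
      push_neg at h
      exact hz0 (funext fun i => h i)
    refine Finset.sum_pos' (fun i _ => sq_nonneg _) ⟨i0, Finset.mem_univ i0, ?_⟩
    have : 0 < ‖z i0‖ := by
      simpa using hi0
    positivity
  have hkey : ‖μ‖ * ∑ i, (u i) ^ 2 ≤ ∑ i, ∑ j, R i j * u i * u j := by
    have e1 : (μ * ∑ i, ((z i) * (starRingEnd ℂ) (z i))) = ∑ i, (starRingEnd ℂ) (z i) * (μ * z i) := by
      rw [Finset.mul_sum]
      exact Finset.sum_congr rfl fun i _ => by ring
    have e2 : ∑ i, (starRingEnd ℂ) (z i) * (μ * z i)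
        = ∑ i, (starRingEnd ℂ) (z i) * ∑ j, M i j * z j :=
      Finset.sum_congr rfl fun i _ => by rw [heig i]
    have e3 : ∀ i, (z i) * (starRingEnd ℂ) (z i) = ((‖z i‖ ^ 2 : ℝ) : ℂ) := by
      intro i
      rw [Complex.mul_conj]
      norm_cast
      rw [Complex.sq_norm]
    have e4 : (μ * ∑ i, ((z i) * (starRingEnd ℂ) (z i))) = μ * ((∑ i, (u i) ^ 2 : ℝ) : ℂ) := by
      congr 1
      rw [Finset.sum_congr rfl fun i _ => e3 i]
      push_cast
      rfl
    have habs : ‖μ‖ * ∑ i, (u i) ^ 2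
        = ‖(∑ i, (starRingEnd ℂ) (z i) * ∑ j, M i j * z j)‖ := by
      rw [← e2, ← e1, e4, norm_mul]
      congr 1
      rw [Complex.norm_real, Real.norm_eq_abs, abs_of_nonneg hN.le]
    rw [habs]
    refine le_trans (norm_sum_le _ _) ?_
    refine Finset.sum_le_sum fun i _ => ?_
    rw [norm_mul]
    have hci : ‖(starRingEnd ℂ) (z i)‖ = u i := Complex.norm_conj (z i)
    rw [hci]
    have hin : ‖∑ j, M i j * z j‖ ≤ ∑ j, R i j * u j := by
      refine le_trans (norm_sum_le _ _) (Finset.sum_le_sum fun j _ => ?_)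
      rw [norm_mul]
      have hmr : ‖M i j‖ = R i j := by
        rw [hM]
        simp only [Matrix.map_apply, Complex.norm_real, Real.norm_eq_abs]
        exact abs_of_nonneg (hR i j)
      rw [hmr]
    calc u i * ‖∑ j, M i j * z j‖
        ≤ u i * ∑ j, R i j * u j :=
          mul_le_mul_of_nonneg_left hin (norm_nonneg _)
      _ = ∑ j, R i j * u i * u j := by
          rw [Finset.mul_sum]
          exact Finset.sum_congr rfl fun j _ => by ring
  have hquad := quad_bound R hsymm hR u (fun i => norm_nonneg _)
  exact le_of_mul_le_mul_right (hkey.trans hquad) hN
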